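/- Let X be a metric space and S : O(X) → [0,∞] an increasing set function on open sets with S(∅) = 0, S superadditive on disjoint open sets, S subadditive on open sets, and dominated by a finite Borel (Radon) measure ν (S(A) ≤ ν(A) for all open A). Then S extends uniquely to a finite Borel measure on X that is absolutely continuous with respect to ν. (De Giorgi–Letta lemma.) -/

import Mathlib

open MeasureTheory ENNReal

open Set



theorem Scount {X : Type*} [MetricSpace X] [MeasurableSpace X] [BorelSpace X]
    (ν : Measure X) [IsFiniteMeasure ν]
    (S : Set X → ℝ≥0∞)
    (hmono : ∀ A B : Set X, IsOpen A → IsOpen B → A ⊆ B → S A ≤ S B)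
    (hempty : S ∅ = 0)
    (hsub : ∀ A B : Set X, IsOpen A → IsOpen B → S (A ∪ B) ≤ S A + S B)
    (hdom : ∀ A : Set X, IsOpen A → S A ≤ ν A) :
    ∀ (U : ℕ → Set X), (∀ n, IsOpen (U n)) → S (⋃ n, U n) ≤ ∑' n, S (U n) := by
  intro U hU
  set V : ℕ → Set X := Set.accumulate U with hV
  have hVo : ∀ n, IsOpen (V n) := fun n => by
    rw [hV, Set.accumulate_def]; exact isOpen_biUnion fun i _ => hU i
  have haccs : ∀ n, V (n+1) = V n ∪ U (n+1) := by
    intro n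
    ext x
    simp only [hV, Set.mem_accumulate, Set.mem_union]
    constructor
    · rintro ⟨y, hy, hxy⟩
      rcases Nat.lt_or_ge y (n+1) with h | h
      · exact Or.inl ⟨y, by omega, hxy⟩
      · have : y = n + 1 := by omega
        exact Or.inr (this ▸ hxy)
    · rintro (⟨y, hy, hxy⟩ | hx)
      · exact ⟨y, by omega, hxy⟩
      · exact ⟨n+1, le_rfl, hx⟩
  have hVsub : ∀ n, S (V n) ≤ ∑' n, S (U n) := by
    intro n
    have : S (V n) ≤ ∑ i ∈ Finset.range (n+1), S (U i) := by
      induction n with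
      | zero => simp [hV, Set.accumulate_def]
      | succ k ih =>
        rw [haccs k, Finset.sum_range_succ]
        exact (hsub _ _ (hVo k) (hU (k+1))).trans (add_le_add_left ih _)
    exact this.trans (ENNReal.sum_le_tsum _)
  have hVmono : Monotone V := Set.monotone_accumulate
  have hUV : (⋃ n, U n) = ⋃ n, V n := (Set.iUnion_accumulate).symm
  set W := ⋃ n, U n with hW
  have hWo : IsOpen W := isOpen_iUnion hU
  rcases eq_or_ne (∑' n, S (U n)) ∞ with htop | htop
  · simp [htop]
  refine ENNReal.le_of_forall_pos_le_add fun ε hε _ => ?_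
  have hδ : (0:ℝ≥0∞) < (ε:ℝ≥0∞)/2 :=
    ENNReal.half_pos (by exact_mod_cast hε.ne')
  have hmeas : ∀ n, MeasurableSet (W \ V n) :=
    fun n => hWo.measurableSet.diff (hVo n).measurableSet
  have hanti : Antitone (fun n => W \ V n) :=
    fun a b hab => Set.diff_subset_diff_right (hVmono hab)
  have htend : Filter.Tendsto (fun n => ν (W \ V n)) Filter.atTop (nhds (ν (⋂ n, W \ V n))) :=
    tendsto_measure_iInter_atTop (fun n => (hmeas n).nullMeasurableSet) hanti
      ⟨0, measure_ne_top ν _⟩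
  have hinter : (⋂ n, W \ V n) = ∅ := by
    rw [← Set.diff_iUnion, ← hUV, Set.diff_self]
  rw [hinter, measure_empty] at htend
  obtain ⟨n, hn⟩ : ∃ n, ν (W \ V n) < (ε:ℝ≥0∞)/2 :=
    (htend.eventually_lt_const hδ).exists
  obtain ⟨C, hCV, hCc, hC⟩ := (hVo n).measurableSet.exists_isClosed_diff_lt
    (measure_ne_top ν _) (ne_of_gt hδ)
  have hWeq : W = V n ∪ (W \ C) := by
    apply Set.Subset.antisymm
    · intro x hx
      by_cases hxC : x ∈ C
      · exact Or.inl (hCV hxC)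
      · exact Or.inr ⟨hx, hxC⟩
    · rintro x (hx | hx)
      · rw [hUV]; exact Set.mem_iUnion.2 ⟨n, hx⟩
      · exact hx.1
  calc S W = S (V n ∪ (W \ C)) := by rw [← hWeq]
    _ ≤ S (V n) + S (W \ C) := hsub _ _ (hVo n) (hWo.sdiff hCc)
    _ ≤ (∑' n, S (U n)) + ν (W \ C) := add_le_add (hVsub n) (hdom _ (hWo.sdiff hCc))
    _ ≤ (∑' n, S (U n)) + (ν (W \ V n) + ν (V n \ C)) := by
        gcongr
        refine (measure_mono ?_).trans (measure_union_le _ _)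
        intro x hx
        by_cases h : x ∈ V n
        · exact Or.inr ⟨h, hx.2⟩
        · exact Or.inl ⟨hx.1, h⟩
    _ ≤ (∑' n, S (U n)) + ε := by
        refine add_le_add_right ?_ _
        calc ν (W \ V n) + ν (V n \ C) ≤ (ε:ℝ≥0∞)/2 + (ε:ℝ≥0∞)/2 := add_le_add hn.le hC.le
          _ = ε := ENNReal.add_halves _

/-- De Giorgi–Letta lemma: an increasing set function on the open subsets of a metric
space, vanishing on `∅`, superadditive on disjoint open sets, subadditive on open sets,
and dominated by a finite Borel measure `ν`, extends uniquely to a finite Borel measure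
absolutely continuous with respect to `ν`. -/
theorem stmt3 {X : Type*} [MetricSpace X] [MeasurableSpace X] [BorelSpace X]
    (ν : Measure X) [IsFiniteMeasure ν]
    (S : Set X → ℝ≥0∞)
    (hmono : ∀ A B : Set X, IsOpen A → IsOpen B → A ⊆ B → S A ≤ S B)
    (hempty : S ∅ = 0)
    (hsuper : ∀ A B : Set X, IsOpen A → IsOpen B → A ∩ B = ∅ → S A + S B ≤ S (A ∪ B))
    (hsub : ∀ A B : Set X, IsOpen A → IsOpen B → S (A ∪ B) ≤ S A + S B)
    (hdom : ∀ A : Set X, IsOpen A → S A ≤ ν A) :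
    ∃! μ' : Measure X, (∀ A : Set X, IsOpen A → μ' A = S A) ∧ μ' ≪ ν := by
  classical
  have hScount : ∀ (U : ℕ → Set X), (∀ n, IsOpen (U n)) → S (⋃ n, U n) ≤ ∑' n, S (U n) :=
    Scount ν S hmono hempty hsub hdom
  set m : Set X → ℝ≥0∞ := fun E => ⨅ (U : Set X) (_ : IsOpen U) (_ : E ⊆ U), S U with hmdef
  have hm_le : ∀ E U, IsOpen U → E ⊆ U → m E ≤ S U := fun E U hUo hEU =>
    iInf_le_of_le U (iInf_le_of_le hUo (iInf_le _ hEU))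
  have hm_open : ∀ U, IsOpen U → m U = S U := fun U hUo =>
    le_antisymm (hm_le U U hUo subset_rfl)
      (le_iInf fun V => le_iInf fun hVo => le_iInf fun hUV => hmono U V hUo hVo hUV)
  have hm_mono : ∀ {A B : Set X}, A ⊆ B → m A ≤ m B := by
    intro A B hAB
    exact le_iInf fun V => le_iInf fun hVo => le_iInf fun hBV => hm_le A V hVo (hAB.trans hBV)
  have hm_lt : ∀ (E : Set X) (c : ℝ≥0∞), m E < c → ∃ U, IsOpen U ∧ E ⊆ U ∧ S U < c := by
    intro E c hc
    rw [hmdef] at hc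
    simp only [iInf_lt_iff] at hc
    obtain ⟨U, hUo, hEU, hU⟩ := hc
    exact ⟨U, hUo, hEU, hU⟩
  have hm_count : ∀ s : ℕ → Set X, m (⋃ i, s i) ≤ ∑' i, m (s i) := by
    intro s
    rcases eq_or_ne (∑' i, m (s i)) ∞ with h | h
    · simp [h]
    refine ENNReal.le_of_forall_pos_le_add fun ε hε _ => ?_
    obtain ⟨δ, hδpos, hδsum⟩ :=
      ENNReal.exists_pos_sum_of_countable (ε := (ε : ℝ≥0∞)) (by exact_mod_cast hε.ne') ℕ
    have hfin : ∀ i, m (s i) ≠ ∞ := fun i =>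
      ne_top_of_le_ne_top h (ENNReal.le_tsum i)
    have hpick : ∀ i, ∃ U, IsOpen U ∧ s i ⊆ U ∧ S U < m (s i) + δ i := fun i =>
      hm_lt _ _ (ENNReal.lt_add_right (hfin i) (by exact_mod_cast (hδpos i).ne'))
    choose U hUo hsU hUlt using hpick
    calc m (⋃ i, s i) ≤ S (⋃ i, U i) :=
          hm_le _ _ (isOpen_iUnion hUo) (Set.iUnion_mono hsU)
      _ ≤ ∑' i, S (U i) := hScount U hUo
      _ ≤ ∑' i, (m (s i) + δ i) := ENNReal.tsum_le_tsum fun i => (hUlt i).le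
      _ = (∑' i, m (s i)) + ∑' i, (δ i : ℝ≥0∞) := ENNReal.tsum_add
      _ ≤ (∑' i, m (s i)) + ε := add_le_add_right hδsum.le _
  set μo : OuterMeasure X :=
    ⟨m, by rw [hm_open ∅ isOpen_empty, hempty], fun h => hm_mono h, fun s _ => hm_count s⟩
    with hμo
  have hμo_apply : ∀ E, μo E = m E := fun _ => rfl
  have hmetric : μo.IsMetric := by
    rintro s t ⟨r, hr0, hr⟩
    refine le_antisymm (measure_union_le s t) ?_
    simp only [hμo_apply]
    refine le_iInf fun V => le_iInf fun hVo => le_iInf fun hstV => ?_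
    set r' : ℝ≥0∞ := min r 1 with hr'
    have hr'0 : r' ≠ 0 := (lt_min (pos_iff_ne_zero.2 hr0) zero_lt_one).ne'
    have hr'top : r' ≠ ∞ := ne_top_of_le_ne_top one_ne_top (min_le_right _ _)
    have hhalf : (0:ℝ≥0∞) < r'/2 := ENNReal.half_pos hr'0
    set Us : Set X := V ∩ {x | EMetric.infEdist x s < r'/2} with hUs
    set Ut : Set X := V ∩ {x | EMetric.infEdist x t < r'/2} with hUt
    have hUso : IsOpen Us := hVo.inter (EMetric.continuous_infEdist.isOpen_preimage _ isOpen_Iio)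
    have hUto : IsOpen Ut := hVo.inter (EMetric.continuous_infEdist.isOpen_preimage _ isOpen_Iio)
    have hsUs : s ⊆ Us := fun x hx =>
      ⟨hstV (Or.inl hx), (Metric.infEDist_zero_of_mem hx).trans_lt hhalf⟩
    have htUt : t ⊆ Ut := fun x hx =>
      ⟨hstV (Or.inr hx), (Metric.infEDist_zero_of_mem hx).trans_lt hhalf⟩
    have hdisj : Us ∩ Ut = ∅ := by
      ext x
      simp only [Set.mem_inter_iff, Set.mem_setOf_eq, Set.mem_empty_iff_false, iff_false]
      rintro ⟨⟨-, hxs⟩, ⟨-, hxt⟩⟩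
      obtain ⟨y, hy, hxy⟩ := EMetric.infEdist_lt_iff.1 hxs
      obtain ⟨z, hz, hxz⟩ := EMetric.infEdist_lt_iff.1 hxt
      have h1 : r ≤ edist y z := hr y hy z hz
      have h2 : edist y z < r' := by
        calc edist y z ≤ edist y x + edist x z := edist_triangle _ _ _
          _ < r'/2 + r'/2 := by
              refine ENNReal.add_lt_add ?_ hxz
              rwa [edist_comm]
          _ = r' := ENNReal.add_halves _
      exact absurd h1 (not_le.2 (h2.trans_le (min_le_left _ _)))
    calc m s + m t ≤ S Us + S Ut := add_le_add (hm_le _ _ hUso hsUs) (hm_le _ _ hUto htUt)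
      _ ≤ S (Us ∪ Ut) := hsuper _ _ hUso hUto hdisj
      _ ≤ S V := hmono _ _ (hUso.union hUto) hVo
          (Set.union_subset Set.inter_subset_left Set.inter_subset_left)
  have hcar : ‹MeasurableSpace X› ≤ μo.caratheodory :=
    (BorelSpace.measurable_eq (α := X)).le.trans hmetric.borel_le_caratheodory
  set μ : Measure X := μo.toMeasure hcar with hμdef
  have hμ_apply : ∀ {A : Set X}, MeasurableSet A → μ A = m A := fun hA =>
    (toMeasure_apply μo hcar hA).trans rfl
  have hμ_open : ∀ A : Set X, IsOpen A → μ A = S A := fun A hA =>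
    (hμ_apply hA.measurableSet).trans (hm_open A hA)
  have habs : μ ≪ ν := by
    refine Measure.AbsolutelyContinuous.mk fun s hs hs0 => ?_
    rw [hμ_apply hs]
    refine le_antisymm ?_ zero_le
    refine ENNReal.le_of_forall_pos_le_add (b := 0) fun ε hε _ => ?_
    obtain ⟨U, hsU, hUo, hU⟩ := s.exists_isOpen_lt_of_lt (ε : ℝ≥0∞)
      (by rw [hs0]; exact_mod_cast hε)
    calc m s ≤ S U := hm_le _ _ hUo hsU
      _ ≤ ν U := hdom _ hUo
      _ ≤ 0 + ε := by simpa using hU.le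
  have hfin : IsFiniteMeasure μ := ⟨by
    rw [hμ_open univ isOpen_univ]
    exact lt_of_le_of_lt (hdom _ isOpen_univ) (measure_lt_top ν _)⟩
  refine ⟨μ, ⟨hμ_open, habs⟩, ?_⟩
  rintro μ'' ⟨h1, h2⟩
  have hfin'' : IsFiniteMeasure μ'' := ⟨by
    rw [h1 univ isOpen_univ]
    exact lt_of_le_of_lt (hdom _ isOpen_univ) (measure_lt_top ν _)⟩
  refine ext_of_generate_finite {s : Set X | IsOpen s}
    (BorelSpace.measurable_eq (α := X)) isPiSystem_isOpen
    (fun s hs => (h1 s hs).trans (hμ_open s hs).symm)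
    (by rw [h1 univ isOpen_univ, hμ_open univ isOpen_univ])
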